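/- Let X be a metric space, x ∈ X, n ∈ ℕ, and φ : X → ℝⁿ Lipschitz such that Lip(⟨v, φ⟩; x) > 0 for every v ∈ ℝⁿ \ {0}. Then there is a constant c > 0 such that for every Banach space Y and every linear map T : ℝⁿ → Y, Lip(T∘φ; x) ≥ c·‖T‖. -/

import Mathlib

open Filter
open scoped ENNReal NNReal Topology

/-- The pointwise Lipschitz constant `Lip(f; x)`. -/
noncomputable def pLip {X Y : Type*} [MetricSpace X] [MetricSpace Y]
    (f : X → Y) (x : X) : ℝ≥0∞ :=
  Filter.limsup (fun y => edist (f x) (f y) / edist x y) (𝓝[≠] x)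

lemma limsup_add_const_le {α : Type*} (f : Filter α) (u : α → ℝ≥0∞) (c : ℝ≥0∞) :
    limsup (fun y => u y + c) f ≤ limsup u f + c := by
  rw [limsup_eq, limsup_eq, ENNReal.sInf_add]
  refine le_iInf₂ fun a ha => sInf_le ?_
  filter_upwards [ha] with y h using add_le_add_left h c

lemma pLip_le_of_le {X E F : Type*} [MetricSpace X] [MetricSpace E] [MetricSpace F]
    {x : X} {f : X → E} {g : X → F}
    (h : ∀ y, edist (f x) (f y) ≤ edist (g x) (g y)) : pLip f x ≤ pLip g x :=
  limsup_le_limsup (Eventually.of_forall fun y => ENNReal.div_le_div_right (h y) _)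

lemma pLip_le_pLip_add {X : Type*} [MetricSpace X] {x : X} {f g : X → ℝ} {L : ℝ≥0∞}
    (h : ∀ y, edist (f x) (f y) ≤ edist (g x) (g y) + L * edist x y) :
    pLip f x ≤ pLip g x + L := by
  refine le_trans (limsup_le_limsup ?_) (limsup_add_const_le _ _ L)
  filter_upwards [self_mem_nhdsWithin] with y (hy : y ≠ x)
  calc edist (f x) (f y) / edist x y
      ≤ (edist (g x) (g y) + L * edist x y) / edist x y :=
        ENNReal.div_le_div_right (h y) _
    _ = edist (g x) (g y) / edist x y + L * edist x y / edist x y := ENNReal.add_div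
    _ ≤ edist (g x) (g y) / edist x y + L := by
        gcongr
        exact ENNReal.div_le_of_le_mul (mul_comm L _ ▸ le_rfl)

lemma pLip_le_lipschitzWith {X : Type*} [MetricSpace X] {x : X} {f : X → ℝ} {C : ℝ≥0}
    (h : LipschitzWith C f) : pLip f x ≤ C := by
  rw [pLip, limsup_eq]
  refine sInf_le ?_
  show ∀ᶠ y in 𝓝[≠] x, edist (f x) (f y) / edist x y ≤ (C : ℝ≥0∞)
  exact Eventually.of_forall fun y => ENNReal.div_le_of_le_mul (h x y)

lemma pLip_const_mul {X : Type*} [MetricSpace X] {x : X} (f : X → ℝ) (r : ℝ) :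
    pLip (fun y => r * f y) x = ENNReal.ofReal |r| * pLip f x := by
  rw [pLip, pLip, ← ENNReal.limsup_const_mul_of_ne_top ENNReal.ofReal_ne_top]
  congr 1
  funext y
  rw [← mul_div_assoc]
  congr 1
  rw [edist_dist, edist_dist, Real.dist_eq, Real.dist_eq, ← mul_sub, abs_mul,
    ENNReal.ofReal_mul (abs_nonneg r)]

/-- If `φ : X → ℝⁿ` is Lipschitz and `Lip(⟨v, φ⟩; x) > 0` for every
`v ≠ 0`, then there is `c > 0` such that for every Banach space `Y` and linear map
`T : ℝⁿ → Y` one has `Lip(T ∘ φ; x) ≥ c ‖T‖`. -/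
theorem stmt15 {X : Type*} [MetricSpace X] (x : X) (n : ℕ)
    (φ : X → EuclideanSpace ℝ (Fin n)) (K : ℝ≥0) (hφ : LipschitzWith K φ)
    (hnd : ∀ v : EuclideanSpace ℝ (Fin n), v ≠ 0 →
      0 < pLip (fun y => (inner ℝ v (φ y) : ℝ)) x) :
    ∃ c : ℝ, 0 < c ∧
      ∀ (Y : Type*) [NormedAddCommGroup Y] [NormedSpace ℝ Y]
        (T : EuclideanSpace ℝ (Fin n) →L[ℝ] Y),
        ENNReal.ofReal (c * ‖T‖) ≤ pLip (fun y => T (φ y)) x := by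
  rcases subsingleton_or_nontrivial (EuclideanSpace ℝ (Fin n)) with hsub | hnt
  · refine ⟨1, one_pos, fun Y _ _ T => ?_⟩
    have hT : T = 0 := by ext v; rw [Subsingleton.elim v 0]; simp
    simp [hT]
  -- nontrivial case
  set F : EuclideanSpace ℝ (Fin n) → ℝ≥0∞ := fun v => pLip (fun y => (inner ℝ v (φ y) : ℝ)) x with hF
  have hfin : ∀ v : EuclideanSpace ℝ (Fin n), F v ≠ ⊤ := by
    intro v
    have hl : LipschitzWith (‖innerSL ℝ v‖₊ * K) (fun y => (inner ℝ v (φ y) : ℝ)) :=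
      ((innerSL ℝ v).lipschitz).comp hφ
    exact ((pLip_le_lipschitzWith hl).trans_lt ENNReal.coe_lt_top).ne
  have hFlip : ∀ v w : EuclideanSpace ℝ (Fin n), F v ≤ F w + ENNReal.ofReal ‖v - w‖ * K := by
    intro v w
    refine pLip_le_pLip_add fun y => ?_
    have hreal : |(inner ℝ v (φ x) : ℝ) - (inner ℝ v (φ y) : ℝ)|
        ≤ |(inner ℝ w (φ x) : ℝ) - (inner ℝ w (φ y) : ℝ)| + ‖v - w‖ * ((K : ℝ) * dist x y) := by
      have h1 : (inner ℝ v (φ x) : ℝ) - (inner ℝ v (φ y) : ℝ)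
          = ((inner ℝ w (φ x) : ℝ) - (inner ℝ w (φ y) : ℝ)) + (inner ℝ (v - w) (φ x - φ y) : ℝ) := by
        simp only [inner_sub_left, inner_sub_right]; ring
      rw [h1]
      refine (abs_add_le _ _).trans ?_
      gcongr
      refine (abs_real_inner_le_norm _ _).trans ?_
      gcongr
      calc ‖φ x - φ y‖ = dist (φ x) (φ y) := (dist_eq_norm _ _).symm
        _ ≤ (K : ℝ) * dist x y := hφ.dist_le_mul x y
    calc edist (inner ℝ v (φ x) : ℝ) (inner ℝ v (φ y) : ℝ)
        = ENNReal.ofReal |(inner ℝ v (φ x) : ℝ) - (inner ℝ v (φ y) : ℝ)| := by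
          rw [edist_dist, Real.dist_eq]
      _ ≤ ENNReal.ofReal (|(inner ℝ w (φ x) : ℝ) - (inner ℝ w (φ y) : ℝ)|
            + ‖v - w‖ * ((K : ℝ) * dist x y)) := ENNReal.ofReal_le_ofReal hreal
      _ ≤ ENNReal.ofReal |(inner ℝ w (φ x) : ℝ) - (inner ℝ w (φ y) : ℝ)|
            + ENNReal.ofReal (‖v - w‖ * ((K : ℝ) * dist x y)) := ENNReal.ofReal_add_le
      _ = edist (inner ℝ w (φ x) : ℝ) (inner ℝ w (φ y) : ℝ)
            + ENNReal.ofReal ‖v - w‖ * (K : ℝ≥0∞) * edist x y := by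
          rw [edist_dist, Real.dist_eq, edist_dist,
            ENNReal.ofReal_mul (norm_nonneg _), ENNReal.ofReal_mul K.coe_nonneg,
            ENNReal.ofReal_coe_nnreal, mul_assoc]
  set G : EuclideanSpace ℝ (Fin n) → ℝ := fun v => (F v).toReal with hG
  have hGle : ∀ v w : EuclideanSpace ℝ (Fin n), G v ≤ G w + (K : ℝ) * ‖v - w‖ := by
    intro v w
    have h1 := hFlip v w
    have h2 : F w + ENNReal.ofReal ‖v - w‖ * K ≠ ⊤ := by
      simp [ENNReal.add_ne_top, hfin w, ENNReal.mul_ne_top, ENNReal.ofReal_ne_top,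
        ENNReal.coe_ne_top]
    calc G v ≤ (F w + ENNReal.ofReal ‖v - w‖ * K).toReal := ENNReal.toReal_mono h2 h1
      _ = G w + ‖v - w‖ * (K : ℝ) := by
          rw [ENNReal.toReal_add (hfin w) (by simp [ENNReal.mul_ne_top]),
            ENNReal.toReal_mul, ENNReal.toReal_ofReal (norm_nonneg _), ENNReal.coe_toReal]
      _ = G w + (K : ℝ) * ‖v - w‖ := by ring
  have hGcont : Continuous G := by
    refine (LipschitzWith.of_dist_le_mul (K := K) fun v w => ?_).continuous
    rw [Real.dist_eq, abs_sub_le_iff]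
    constructor
    · have := hGle v w
      rw [dist_eq_norm]; linarith
    · have := hGle w v
      rw [dist_eq_norm, ← norm_neg]
      simp only [neg_sub]
      linarith [hGle w v]
  have hne : (Metric.sphere (0 : EuclideanSpace ℝ (Fin n)) 1).Nonempty :=
    NormedSpace.sphere_nonempty.mpr zero_le_one
  obtain ⟨v₀, hv₀S, hmin⟩ :=
    (isCompact_sphere (0 : EuclideanSpace ℝ (Fin n)) 1).exists_isMinOn hne hGcont.continuousOn
  have hv₀norm : ‖v₀‖ = 1 := by simpa using hv₀S
  have hv₀ne : v₀ ≠ 0 := by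
    intro h; rw [h] at hv₀norm; simp at hv₀norm
  have hc : 0 < G v₀ := ENNReal.toReal_pos (hnd v₀ hv₀ne).ne' (hfin v₀)
  refine ⟨G v₀, hc, ?_⟩
  intro Y _ _ T
  by_cases hT : T = 0
  · simp [hT]
  · obtain ⟨v, hvS, hmax⟩ := (isCompact_sphere (0 : EuclideanSpace ℝ (Fin n)) 1).exists_isMaxOn hne
      (T.continuous.norm.continuousOn)
    have hv1 : ‖v‖ = 1 := by simpa using hvS
    have hTv : ‖T v‖ = ‖T‖ := by
      refine le_antisymm (by simpa [hv1] using T.le_opNorm v) ?_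
      refine T.opNorm_le_bound (norm_nonneg _) fun u => ?_
      rcases eq_or_ne u 0 with rfl | hu
      · simp
      · have hun : ‖u‖ ≠ 0 := norm_ne_zero_iff.mpr hu
        have hmem : (‖u‖⁻¹ • u) ∈ Metric.sphere (0 : EuclideanSpace ℝ (Fin n)) 1 := by
          simp [norm_smul, abs_of_nonneg (inv_nonneg.mpr (norm_nonneg u)),
            inv_mul_cancel₀ hun]
        have hle : ‖T (‖u‖⁻¹ • u)‖ ≤ ‖T v‖ := hmax hmem
        have heq : ‖T u‖ = ‖u‖ * ‖T (‖u‖⁻¹ • u)‖ := by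
          rw [map_smul, norm_smul, norm_inv, norm_norm, ← mul_assoc,
            mul_inv_cancel₀ hun, one_mul]
        rw [heq, mul_comm]
        exact mul_le_mul_of_nonneg_right hle (norm_nonneg u)
    have hTnorm : 0 < ‖T‖ := by
      rcases (norm_nonneg T).lt_or_eq with h | h
      · exact h
      · exact absurd ((ContinuousLinearMap.opNorm_zero_iff T).mp h.symm) hT
    have hTvne : T v ≠ 0 := by
      intro h
      rw [h, norm_zero] at hTv
      exact hTnorm.ne hTv
    obtain ⟨ξ, hξ1, hξTv⟩ := exists_dual_vector ℝ (T v) (norm_ne_zero_iff.mpr hTvne)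
    set w : EuclideanSpace ℝ (Fin n) := (InnerProductSpace.toDual ℝ (EuclideanSpace ℝ (Fin n))).symm (ξ.comp T) with hw
    have hwip : ∀ u : EuclideanSpace ℝ (Fin n), (inner ℝ w u : ℝ) = ξ (T u) := fun u =>
      InnerProductSpace.toDual_symm_apply
    have hwT : ‖T‖ ≤ ‖w‖ := by
      calc ‖T‖ = ‖T v‖ := hTv.symm
        _ = ξ (T v) := by rw [hξTv]; simp
        _ = (inner ℝ w v : ℝ) := (hwip v).symm
        _ ≤ ‖w‖ * ‖v‖ := real_inner_le_norm w v
        _ = ‖w‖ := by rw [hv1, mul_one]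
    have hwne : w ≠ 0 := norm_pos_iff.mp (hTnorm.trans_le hwT)
    have hstep1 : F w ≤ pLip (fun y => T (φ y)) x := by
      refine pLip_le_of_le fun y => ?_
      calc edist (inner ℝ w (φ x) : ℝ) (inner ℝ w (φ y) : ℝ)
          = ENNReal.ofReal |ξ (T (φ x)) - ξ (T (φ y))| := by
            rw [edist_dist, Real.dist_eq, hwip, hwip]
        _ ≤ ENNReal.ofReal ‖T (φ x) - T (φ y)‖ := by
            apply ENNReal.ofReal_le_ofReal
            calc |ξ (T (φ x)) - ξ (T (φ y))| = ‖ξ (T (φ x) - T (φ y))‖ := by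
                  rw [map_sub]; exact (Real.norm_eq_abs _).symm
              _ ≤ ‖ξ‖ * ‖T (φ x) - T (φ y)‖ := ξ.le_opNorm _
              _ = ‖T (φ x) - T (φ y)‖ := by rw [hξ1, one_mul]
        _ = edist (T (φ x)) (T (φ y)) := by rw [edist_dist, dist_eq_norm]
    set w' : EuclideanSpace ℝ (Fin n) := ‖w‖⁻¹ • w with hw'
    have hwn : ‖w‖ ≠ 0 := norm_ne_zero_iff.mpr hwne
    have hw'S : w' ∈ Metric.sphere (0 : EuclideanSpace ℝ (Fin n)) 1 := by
      simp [hw', norm_smul, abs_of_nonneg (inv_nonneg.mpr (norm_nonneg w)),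
        inv_mul_cancel₀ hwn]
    have hhom : F w = ENNReal.ofReal ‖w‖ * F w' := by
      have hfun : (fun y => (inner ℝ w (φ y) : ℝ)) = fun y => ‖w‖ * (inner ℝ w' (φ y) : ℝ) := by
        funext y
        rw [hw', real_inner_smul_left, ← mul_assoc, mul_inv_cancel₀ hwn, one_mul]
      rw [hF]
      show pLip (fun y => (inner ℝ w (φ y) : ℝ)) x = _
      rw [hfun, pLip_const_mul, abs_of_nonneg (norm_nonneg w)]
    calc ENNReal.ofReal (G v₀ * ‖T‖) ≤ ENNReal.ofReal (G v₀ * ‖w‖) := by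
          apply ENNReal.ofReal_le_ofReal
          exact mul_le_mul_of_nonneg_left hwT hc.le
      _ = ENNReal.ofReal ‖w‖ * ENNReal.ofReal (G v₀) := by
          rw [← ENNReal.ofReal_mul (norm_nonneg w), mul_comm]
      _ ≤ ENNReal.ofReal ‖w‖ * F w' := by
          gcongr
          have : ENNReal.ofReal (G w') = F w' := ENNReal.ofReal_toReal (hfin w')
          calc ENNReal.ofReal (G v₀) ≤ ENNReal.ofReal (G w') :=
                ENNReal.ofReal_le_ofReal (hmin hw'S)
            _ = F w' := this
      _ = F w := hhom.symm
      _ ≤ pLip (fun y => T (φ y)) x := hstep1
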